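/- Let J = (-1/(1+α+β)) · [[1, α, β], [β, 1, α], [α, β, 1]] + μ · [[-2, 1, 1], [1, -2, 1], [1, 1, -2]]. Then the eigenvalues of J are λ₁ = -1 and λ_{2,3} = [(α+β-2)/(2(1+α+β)) - 3μ] ± i·[√3(β-α)/(2(1+α+β))]. -/

import Mathlib

set_option maxHeartbeats 1000000


open Matrix Complex

/-- The eigenvalues of the Jacobian of the linearly-perturbed May–Leonard
system at the equal-population fixed point are `-1` and
`(α+β-2)/(2(1+α+β)) - 3μ ± i √3 (β-α)/(2(1+α+β))`. -/
theorem jacobian_ec_eigenvalues (α β μ : ℝ) (hα : 0 < α) (hβ : 0 < β) :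
    let J : Matrix (Fin 3) (Fin 3) ℝ :=
      (-1 / (1 + α + β)) • !![1, α, β; β, 1, α; α, β, 1] +
        μ • !![-2, 1, 1; 1, -2, 1; 1, 1, -2]
    let lamRe : ℝ := (α + β - 2) / (2 * (1 + α + β)) - 3 * μ
    let lamIm : ℝ := Real.sqrt 3 * (β - α) / (2 * (1 + α + β))
    {z : ℂ | ∃ v : Fin 3 → ℂ, v ≠ 0 ∧ (J.map (Complex.ofReal)).mulVec v = z • v}
      = {-1, (lamRe : ℂ) + lamIm * Complex.I, (lamRe : ℂ) - lamIm * Complex.I} := by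
  intro J lamRe lamIm
  have hs : (0:ℝ) < 1 + α + β := by linarith
  have hs' : ((1:ℂ) + (α:ℂ) + (β:ℂ)) ≠ 0 := by
    have : ((1 + α + β : ℝ) : ℂ) ≠ 0 := by exact_mod_cast hs.ne'
    push_cast at this; convert this using 1
  ext z
  simp only [Set.mem_setOf_eq, Set.mem_insert_iff, Set.mem_singleton_iff]
  have key : (∃ v : Fin 3 → ℂ, v ≠ 0 ∧ (J.map Complex.ofReal).mulVec v = z • v)
      ↔ ((J.map Complex.ofReal) - z • 1).det = 0 := by
    rw [← Matrix.exists_mulVec_eq_zero_iff]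
    constructor
    · rintro ⟨v, hv, h⟩
      refine ⟨v, hv, ?_⟩
      simp [Matrix.sub_mulVec, h, Matrix.smul_mulVec, Matrix.one_mulVec]
    · rintro ⟨v, hv, h⟩
      refine ⟨v, hv, ?_⟩
      have := h
      rw [Matrix.sub_mulVec, Matrix.smul_mulVec, Matrix.one_mulVec, sub_eq_zero] at this
      exact this
  rw [key]
  have hr : ((lamRe : ℝ) : ℂ) = ((α:ℂ) + β - 2) / (2 * (1 + α + β)) - 3 * μ := by
    simp only [lamRe]; push_cast; ring
  have hIm2 : ((lamIm : ℝ) : ℂ)^2 = 3 * ((β:ℂ) - α)^2 / (4 * (1 + (α:ℂ) + β)^2) := by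
    have h3 : (lamIm : ℝ)^2 = 3 * (β - α)^2 / (4 * (1 + α + β)^2) := by
      simp only [lamIm]
      rw [div_pow, mul_pow, Real.sq_sqrt (by norm_num : (3:ℝ) ≥ 0)]
      ring
    calc ((lamIm : ℝ) : ℂ)^2 = (((lamIm:ℝ)^2 : ℝ) : ℂ) := by push_cast; ring
    _ = _ := by rw [h3]; push_cast; ring
  have hM : (J.map Complex.ofReal) - z • 1 =
      !![ -1/(1+(α:ℂ)+β) - 2*μ - z, -(α:ℂ)/(1+(α:ℂ)+β) + μ, -(β:ℂ)/(1+(α:ℂ)+β) + μ;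
          -(β:ℂ)/(1+(α:ℂ)+β) + μ, -1/(1+(α:ℂ)+β) - 2*μ - z, -(α:ℂ)/(1+(α:ℂ)+β) + μ;
          -(α:ℂ)/(1+(α:ℂ)+β) + μ, -(β:ℂ)/(1+(α:ℂ)+β) + μ, -1/(1+(α:ℂ)+β) - 2*μ - z] := by
    ext i j
    fin_cases i <;> fin_cases j <;>
      simp [J, Matrix.one_apply] <;> push_cast <;> field_simp <;> ring
  have factor : ((J.map Complex.ofReal) - z • 1).det
      = -((z + 1) * ((z - lamRe)^2 + ((lamIm:ℝ):ℂ)^2)) := by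
    rw [hM, Matrix.det_fin_three, hr, hIm2]
    norm_num [Matrix.cons_val_zero, Matrix.cons_val_one, Matrix.cons_val_two, Matrix.tail_cons, Matrix.head_cons]
    field_simp
    ring
  have exp2 : (z - ((lamRe:ℂ) + lamIm * I)) * (z - ((lamRe:ℂ) - lamIm * I))
      = (z - lamRe)^2 + ((lamIm:ℝ):ℂ)^2 := by
    linear_combination (-(((lamIm:ℝ):ℂ))^2) * Complex.I_sq
  rw [factor, neg_eq_zero, ← exp2, mul_eq_zero, mul_eq_zero, sub_eq_zero, sub_eq_zero,
    add_eq_zero_iff_eq_neg]
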